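/- Let k be an even integer greater than 2 and let ε : ℝ^× → {±1} be either the trivial character or the sign character. For b ∈ ℝ∖{0,−1} define J^ε(k;b) = ∫_{ℝ^×} ((1+it)/√(t²+1))^k · (1 + i(b·t^{−1} + t(b+1)))^{−k/2} · ε(t) dt/|t|. Then for every δ > 0 there is a constant C (depending only on δ and k) such that |b(b+1)|^δ · |J^ε(k;b)| ≤ C·(1+|b|)^{−k/2+2δ} for all b ∈ ℝ∖{0,−1}. -/

import Mathlib

set_option maxHeartbeats 1000000


/- Statement 19 (Lemma `ArchIntEst`): for `k` even, `k > 2`, and `ε` the trivial or the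
   sign character of `ℝ^×`, the archimedean orbital integral
   `J^ε(k;b) = ∫_{ℝ^×} ((1+it)/√(t²+1))^k (1+i(b t⁻¹+t(b+1)))^{−k/2} ε(t) dt/|t|`
   satisfies, for every `δ > 0`,
   `|b(b+1)|^δ·|J^ε(k;b)| ≤ C·(1+|b|)^{−k/2+2δ}` for all `b ∈ ℝ∖{0,−1}`. -/

open Complex MeasureTheory

namespace Stmt19

/-- `J^ε(k;b)`, the integral over `ℝ^× = ℝ∖{0}` with respect to `dt/|t|`. -/
noncomputable def J (k : ℤ) (ε : ℝ → ℝ) (b : ℝ) : ℂ :=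
  ∫ t in {t : ℝ | t ≠ 0},
    (((1 : ℂ) + (t : ℂ) * I) / (Real.sqrt (t ^ 2 + 1) : ℂ)) ^ k *
      ((1 : ℂ) + I * ((b : ℂ) * (t : ℂ)⁻¹ + (t : ℂ) * ((b : ℂ) + 1))) ^ (-(k / 2)) *
      (ε t : ℂ) / (|t| : ℝ)

lemma norm_f (n m : ℤ) (b t e : ℝ) (he : |e| = 1) :
    ‖(((1:ℂ) + (t:ℂ)*I)/((Real.sqrt (t^2+1) : ℝ):ℂ))^n *
      ((1:ℂ)+I*((b:ℂ)*(t:ℂ)⁻¹+(t:ℂ)*((b:ℂ)+1)))^(-m) * (e:ℂ) / ((|t|:ℝ):ℂ)‖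
    = (1+(b*t⁻¹+t*(b+1))^2) ^ (-(m:ℝ)/2) / |t| := by
  have hsq : (0:ℝ) < t^2+1 := by positivity
  have h1 : ‖(1:ℂ)+(t:ℂ)*I‖ = Real.sqrt (t^2+1) := by
    have := Complex.norm_add_mul_I 1 t
    rw [add_comm (1^2 : ℝ)] at this
    simpa using this
  have hbase1 : ‖((1:ℂ)+(t:ℂ)*I)/((Real.sqrt (t^2+1):ℝ):ℂ)‖ = 1 := by
    rw [norm_div, h1, Complex.norm_real, Real.norm_eq_abs, _root_.abs_of_nonneg (Real.sqrt_nonneg _),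
      div_self (Real.sqrt_pos.2 hsq).ne']
  have hu : ((1:ℂ)+I*((b:ℂ)*(t:ℂ)⁻¹+(t:ℂ)*((b:ℂ)+1))) = (1:ℂ) + ((b*t⁻¹+t*(b+1) : ℝ):ℂ)*I := by
    push_cast; ring
  have h2 : ‖(1:ℂ)+I*((b:ℂ)*(t:ℂ)⁻¹+(t:ℂ)*((b:ℂ)+1))‖
      = Real.sqrt (1 + (b*t⁻¹+t*(b+1))^2) := by
    rw [hu]
    have := Complex.norm_add_mul_I 1 (b*t⁻¹+t*(b+1))
    simpa using this
  have hx : (0:ℝ) ≤ 1 + (b*t⁻¹+t*(b+1))^2 := by positivity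
  rw [norm_div, norm_mul, norm_mul, norm_zpow, norm_zpow, hbase1, one_zpow, one_mul, h2,
    Complex.norm_real, Real.norm_eq_abs, he, mul_one, Complex.norm_real, Real.norm_eq_abs, _root_.abs_abs]
  congr 1
  rw [Real.sqrt_eq_rpow, ← Real.rpow_intCast ((1 + (b*t⁻¹+t*(b+1))^2) ^ (1/2:ℝ)) (-m),
    ← Real.rpow_mul hx]
  congr 1
  push_cast; ring

lemma amgm {x y θ : ℝ} (hx : 0 < x) (hy : 0 < y) (h0 : 0 ≤ θ) (h1 : θ ≤ 1) :
    x ^ (1-θ) * y ^ θ ≤ x + y := by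
  rcases le_total x y with h | h
  · calc x ^ (1-θ) * y ^ θ ≤ y ^ (1-θ) * y ^ θ :=
          mul_le_mul_of_nonneg_right (Real.rpow_le_rpow hx.le h (by linarith))
            (Real.rpow_nonneg hy.le θ)
    _ = y := by rw [← Real.rpow_add hy]; simp
    _ ≤ x + y := by linarith
  · calc x ^ (1-θ) * y ^ θ ≤ x ^ (1-θ) * x ^ θ :=
          mul_le_mul_of_nonneg_left (Real.rpow_le_rpow hy.le h h0)
            (Real.rpow_nonneg hx.le _)
    _ = x := by rw [← Real.rpow_add hx]; simp
    _ ≤ x + y := by linarith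

lemma rpow_sq_neg {x : ℝ} (hx : 0 ≤ x) (s : ℝ) : (x^2) ^ (-s) = x ^ (-(2*s)) := by
  rw [← Real.rpow_natCast x 2, ← Real.rpow_mul hx]
  norm_num

lemma pw_main {b c t s q : ℝ} (hb : b ≠ 0) (ht : t ≠ 0)
    (hcb : 1 + 2*(b*c) = b^2 + c^2)
    (hs : 0 < s) (hq : 0 < q) (hsq : s ≤ q/2) :
    (1 + (b*t⁻¹ + t*c)^2) ^ (-q) ≤
      (b^2 + c^2) ^ (s-q) * ((b*t⁻¹)^2 + (c*t)^2) ^ (-s) := by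
  have hA : 0 < b^2 + c^2 := by
    have h1 : 0 < b^2 := by positivity
    nlinarith [sq_nonneg c]
  have hv : 0 < (b*t⁻¹)^2 + (c*t)^2 := by
    have h1 : 0 < (b*t⁻¹)^2 := by positivity
    nlinarith [sq_nonneg (c*t)]
  have hsum : 1 + (b*t⁻¹ + t*c)^2 = (b^2+c^2) + ((b*t⁻¹)^2 + (c*t)^2) := by
    field_simp
    linear_combination (t^2) * hcb
  set θ : ℝ := s/q with hθ
  have hθ0 : 0 ≤ θ := by positivity
  have hθ1 : θ ≤ 1 := by
    rw [hθ, div_le_one hq]; linarith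
  have key := amgm hA hv hθ0 hθ1
  have hmid : 0 < (b^2+c^2) ^ (1-θ) * ((b*t⁻¹)^2 + (c*t)^2) ^ θ :=
    mul_pos (Real.rpow_pos_of_pos hA _) (Real.rpow_pos_of_pos hv _)
  calc (1 + (b*t⁻¹ + t*c)^2) ^ (-q)
      ≤ ((b^2+c^2) ^ (1-θ) * ((b*t⁻¹)^2 + (c*t)^2) ^ θ) ^ (-q) := by
        apply Real.rpow_le_rpow_of_nonpos hmid (by rw [hsum] at *; exact key) (by linarith)
    _ = (b^2 + c^2) ^ (s-q) * ((b*t⁻¹)^2 + (c*t)^2) ^ (-s) := by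
        rw [Real.mul_rpow (Real.rpow_nonneg hA.le _) (Real.rpow_nonneg hv.le _),
          ← Real.rpow_mul hA.le, ← Real.rpow_mul hv.le]
        congr 1
        · congr 1; rw [hθ]; field_simp; ring
        · congr 1; rw [hθ]; field_simp

lemma pw_v1 {b c t s : ℝ} (hb : b ≠ 0) (ht : t ≠ 0) (hs : 0 < s) :
    ((b*t⁻¹)^2 + (c*t)^2) ^ (-s) ≤ |b| ^ (-(2*s)) * |t| ^ (2*s) := by
  have h1 : 0 < (b*t⁻¹)^2 := by positivity
  calc ((b*t⁻¹)^2 + (c*t)^2) ^ (-s) ≤ ((b*t⁻¹)^2) ^ (-s) :=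
        Real.rpow_le_rpow_of_nonpos h1 (le_add_of_nonneg_right (sq_nonneg _))
          (neg_nonpos.2 hs.le)
    _ = (|b*t⁻¹|^2) ^ (-s) := by rw [_root_.sq_abs]
    _ = |b*t⁻¹| ^ (-(2*s)) := rpow_sq_neg (abs_nonneg _) s
    _ = (|b| * |t|⁻¹) ^ (-(2*s)) := by rw [abs_mul, abs_inv]
    _ = |b| ^ (-(2*s)) * (|t|⁻¹) ^ (-(2*s)) :=
        Real.mul_rpow (abs_nonneg _) (inv_nonneg.2 (abs_nonneg _))
    _ = |b| ^ (-(2*s)) * |t| ^ (2*s) := by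
        rw [← Real.rpow_neg_one |t|, ← Real.rpow_mul (abs_nonneg t)]
        norm_num

lemma pw_v2 {b c t s : ℝ} (hc : c ≠ 0) (ht : t ≠ 0) (hs : 0 < s) :
    ((b*t⁻¹)^2 + (c*t)^2) ^ (-s) ≤ |c| ^ (-(2*s)) * |t| ^ (-(2*s)) := by
  have h1 : 0 < (c*t)^2 := by positivity
  calc ((b*t⁻¹)^2 + (c*t)^2) ^ (-s) ≤ ((c*t)^2) ^ (-s) :=
        Real.rpow_le_rpow_of_nonpos h1 (le_add_of_nonneg_left (sq_nonneg _))
          (neg_nonpos.2 hs.le)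
    _ = (|c*t|^2) ^ (-s) := by rw [_root_.sq_abs]
    _ = |c*t| ^ (-(2*s)) := rpow_sq_neg (abs_nonneg _) s
    _ = (|c| * |t|) ^ (-(2*s)) := by rw [abs_mul]
    _ = |c| ^ (-(2*s)) * |t| ^ (-(2*s)) := Real.mul_rpow (abs_nonneg _) (abs_nonneg _)

lemma lint_Ioc {lam p : ℝ} (hlam : 0 < lam) (hp : -1 < p) :
    ∫⁻ t in Set.Ioc 0 lam, ENNReal.ofReal (t ^ p) = ENNReal.ofReal (lam^(p+1)/(p+1)) := by
  have hint : IntegrableOn (fun t : ℝ => t ^ p) (Set.Ioc 0 lam) :=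
    (intervalIntegral.intervalIntegrable_rpow' hp).1
  rw [← MeasureTheory.ofReal_integral_eq_lintegral_ofReal hint
    ((ae_restrict_iff' measurableSet_Ioc).2 (Filter.Eventually.of_forall
      fun t ht => Real.rpow_nonneg ht.1.le p))]
  congr 1
  rw [← intervalIntegral.integral_of_le hlam.le, integral_rpow (Or.inl hp),
    Real.zero_rpow (by linarith)]
  ring

lemma lint_Ioi {lam p : ℝ} (hlam : 0 < lam) (hp : p < -1) :
    ∫⁻ t in Set.Ioi lam, ENNReal.ofReal (t ^ p) = ENNReal.ofReal (-lam^(p+1)/(p+1)) := by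
  have hint : IntegrableOn (fun t : ℝ => t ^ p) (Set.Ioi lam) :=
    integrableOn_Ioi_rpow_of_lt hp hlam
  rw [← MeasureTheory.ofReal_integral_eq_lintegral_ofReal hint
    ((ae_restrict_iff' measurableSet_Ioi).2 (Filter.Eventually.of_forall
      fun t ht => Real.rpow_nonneg (le_of_lt (hlam.trans ht)) p))]
  congr 1
  exact integral_Ioi_rpow_of_lt hp hlam

theorem statement19 (k : ℤ) (hkeven : Even k) (hk : 2 < k)
    (ε : ℝ → ℝ)
    (hε : (∀ t : ℝ, ε t = 1) ∨ (∀ t : ℝ, t ≠ 0 → ε t = if t < 0 then -1 else 1))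
    (δ : ℝ) (hδ : 0 < δ) :
    ∃ C : ℝ, ∀ b : ℝ, b ≠ 0 → b ≠ -1 →
      |b * (b + 1)| ^ δ * ‖J k ε b‖ ≤
        C * (1 + |b|) ^ (-(k : ℝ) / 2 + 2 * δ) := by
  obtain ⟨m, rfl⟩ := hkeven
  have hm : 2 ≤ m := by omega
  set q : ℝ := (m:ℝ)/2 with hqdef
  have hq0 : 0 < q := by
    rw [hqdef]
    have : (2:ℝ) ≤ (m:ℝ) := by exact_mod_cast hm
    linarith
  set s : ℝ := min δ (q/2) with hsdef
  have hs0 : 0 < s := lt_min hδ (by linarith)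
  have hsδ : s ≤ δ := min_le_left _ _
  have hsq : s ≤ q/2 := min_le_right _ _
  refine ⟨(2/s)/(2:ℝ)^(δ-s) * (8:ℝ)^|δ-q|, ?_⟩
  intro b hb0 hb1
  have hc0 : b + 1 ≠ 0 := fun h => hb1 (by linarith)
  have hb' : 0 < |b| := abs_pos.2 hb0
  have hc' : 0 < |b+1| := abs_pos.2 hc0
  set A : ℝ := b^2 + (b+1)^2 with hAdef
  have hcb : 1 + 2*(b*(b+1)) = b^2 + (b+1)^2 := by ring
  have hA : 0 < A := by
    have h1 : 0 < b^2 := by positivity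
    rw [hAdef]; nlinarith [sq_nonneg (b+1)]
  set K : ℝ := A ^ (s-q) with hKdef
  have hK0 : 0 ≤ K := Real.rpow_nonneg hA.le _
  set lam : ℝ := Real.sqrt (|b|/|b+1|) with hlamdef
  have hlam : 0 < lam := Real.sqrt_pos.2 (div_pos hb' hc')
  -- the integrand
  set F : ℝ → ℂ := fun t =>
    (((1 : ℂ) + (t : ℂ) * I) / (Real.sqrt (t ^ 2 + 1) : ℂ)) ^ (m+m) *
      ((1 : ℂ) + I * ((b : ℂ) * (t : ℂ)⁻¹ + (t : ℂ) * ((b : ℂ) + 1))) ^ (-((m+m) / 2)) *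
      (ε t : ℂ) / (|t| : ℝ) with hFdef
  have hJ : J (m+m) ε b = ∫ t in {t : ℝ | t ≠ 0}, F t := rfl
  have hε1 : ∀ t : ℝ, t ≠ 0 → |ε t| = 1 := by
    intro t ht
    rcases hε with h | h
    · rw [h t]; exact abs_one
    · rw [h t ht]; split_ifs <;> simp
  have hnorm : ∀ t : ℝ, t ≠ 0 →
      ‖F t‖ = (1 + (b*t⁻¹ + t*(b+1))^2) ^ (-(m:ℝ)/2) / |t| := by
    intro t ht
    have h2 : (-((m+m)/2) : ℤ) = -m := by omega
    rw [hFdef]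
    simp only []
    rw [h2]
    exact norm_f (m+m) m b t (ε t) (hε1 t ht)
  -- the majorant
  set Mf : ℝ → ℝ := fun t => K * (if |t| ≤ lam then |b| ^ (-(2*s)) * |t| ^ (2*s-1)
      else |b+1| ^ (-(2*s)) * |t| ^ (-(2*s)-1)) with hMfdef
  set G : ℝ → ENNReal := fun t => ENNReal.ofReal (Mf t) with hGdef
  have hGmeas : Measurable G := by
    rw [hGdef, hMfdef]
    apply Measurable.ennreal_ofReal
    apply Measurable.const_mul
    apply Measurable.ite (measurableSet_le measurable_abs measurable_const)
    · fun_prop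
    · fun_prop
  have hexp : -(m:ℝ)/2 = -q := by rw [hqdef]; ring
  -- pointwise bound
  have hpt : ∀ t ∈ {t : ℝ | t ≠ 0}, ENNReal.ofReal ‖F t‖ ≤ G t := by
    intro t ht
    have ht' : t ≠ 0 := ht
    have habs : 0 < |t| := abs_pos.2 ht'
    apply ENNReal.ofReal_le_ofReal
    rw [hnorm t ht']
    have hmain : (1 + (b*t⁻¹ + t*(b+1))^2) ^ (-(m:ℝ)/2)
        ≤ K * (((b*t⁻¹)^2 + ((b+1)*t)^2) ^ (-s)) := by
      rw [hexp, hKdef, hAdef]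
      exact pw_main hb0 ht' hcb hs0 hq0 hsq
    rw [hMfdef]
    simp only []
    split_ifs with hcase
    · have h1 : (1 + (b*t⁻¹ + t*(b+1))^2) ^ (-(m:ℝ)/2)
          ≤ K * (|b| ^ (-(2*s)) * |t| ^ (2*s)) :=
        hmain.trans (mul_le_mul_of_nonneg_left (pw_v1 hb0 ht' hs0) hK0)
      calc (1 + (b*t⁻¹ + t*(b+1))^2) ^ (-(m:ℝ)/2) / |t|
          ≤ K * (|b| ^ (-(2*s)) * |t| ^ (2*s)) / |t| := by
            exact div_le_div_of_nonneg_right h1 habs.le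
        _ = K * (|b| ^ (-(2*s)) * |t| ^ (2*s-1)) := by
            rw [Real.rpow_sub habs, Real.rpow_one]; ring
    · have h1 : (1 + (b*t⁻¹ + t*(b+1))^2) ^ (-(m:ℝ)/2)
          ≤ K * (|b+1| ^ (-(2*s)) * |t| ^ (-(2*s))) :=
        hmain.trans (mul_le_mul_of_nonneg_left (pw_v2 hc0 ht' hs0) hK0)
      calc (1 + (b*t⁻¹ + t*(b+1))^2) ^ (-(m:ℝ)/2) / |t|
          ≤ K * (|b+1| ^ (-(2*s)) * |t| ^ (-(2*s))) / |t| := by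
            exact div_le_div_of_nonneg_right h1 habs.le
        _ = K * (|b+1| ^ (-(2*s)) * |t| ^ (-(2*s)-1)) := by
            rw [Real.rpow_sub habs, Real.rpow_one]; ring
  -- the two basic integrals
  set B1 : ℝ := K * |b| ^ (-(2*s)) * (lam^(2*s)/(2*s)) with hB1def
  set B2 : ℝ := K * |b+1| ^ (-(2*s)) * (lam^(-(2*s))/(2*s)) with hB2def
  have hB1nn : 0 ≤ B1 := by
    rw [hB1def]
    have := Real.rpow_nonneg (abs_nonneg b) (-(2*s))
    have := Real.rpow_nonneg hlam.le (2*s)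
    positivity
  have hB2nn : 0 ≤ B2 := by
    rw [hB2def]
    have := Real.rpow_nonneg (abs_nonneg (b+1)) (-(2*s))
    have := Real.rpow_nonneg hlam.le (-(2*s))
    positivity
  have hIoi : ∫⁻ t in Set.Ioi (0:ℝ), G t ≤ ENNReal.ofReal B1 + ENNReal.ofReal B2 := by
    rw [← Set.Ioc_union_Ioi_eq_Ioi hlam.le]
    refine le_trans (lintegral_union_le _ _ _) (add_le_add ?_ ?_)
    · have hcong : ∀ t ∈ Set.Ioc (0:ℝ) lam, G t
          = ENNReal.ofReal (K * |b| ^ (-(2*s))) * ENNReal.ofReal (t ^ (2*s-1)) := by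
        intro t ht
        have h1 : |t| = t := _root_.abs_of_pos ht.1
        rw [hGdef, hMfdef]
        simp only []
        rw [h1, if_pos ht.2, ← mul_assoc,
          ENNReal.ofReal_mul (mul_nonneg hK0 (Real.rpow_nonneg (abs_nonneg b) _))]
      rw [setLIntegral_congr_fun measurableSet_Ioc hcong,
        lintegral_const_mul _ (by fun_prop : Measurable fun t : ℝ => ENNReal.ofReal (t ^ (2*s-1))),
        lint_Ioc hlam (by linarith : (-1:ℝ) < 2*s-1)]
      rw [← ENNReal.ofReal_mul (mul_nonneg hK0 (Real.rpow_nonneg (abs_nonneg b) _))]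
      apply le_of_eq
      congr 1
      rw [hB1def]
      have he : 2*s-1+1 = 2*s := by ring
      rw [he, mul_assoc]
    · have hcong : ∀ t ∈ Set.Ioi lam, G t
          = ENNReal.ofReal (K * |b+1| ^ (-(2*s))) * ENNReal.ofReal (t ^ (-(2*s)-1)) := by
        intro t ht
        have ht0 : 0 < t := hlam.trans ht
        have h1 : |t| = t := _root_.abs_of_pos ht0
        rw [hGdef, hMfdef]
        simp only []
        rw [h1, if_neg (not_le.2 ht), ← mul_assoc,
          ENNReal.ofReal_mul (mul_nonneg hK0 (Real.rpow_nonneg (abs_nonneg (b+1)) _))]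
      rw [setLIntegral_congr_fun measurableSet_Ioi hcong,
        lintegral_const_mul _
          (by fun_prop : Measurable fun t : ℝ => ENNReal.ofReal (t ^ (-(2*s)-1))),
        lint_Ioi hlam (by linarith : -(2*s)-1 < (-1:ℝ))]
      rw [← ENNReal.ofReal_mul (mul_nonneg hK0 (Real.rpow_nonneg (abs_nonneg (b+1)) _))]
      apply le_of_eq
      congr 1
      rw [hB2def]
      have he : -(2*s)-1+1 = -(2*s) := by ring
      rw [he, neg_div_neg_eq, mul_assoc]
  have hneg : ∫⁻ t in Set.Iio (0:ℝ), G t = ∫⁻ t in Set.Ioi (0:ℝ), G t := by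
    have hmap : Measure.map Neg.neg (volume.restrict (Set.Ioi (0:ℝ)))
        = volume.restrict (Set.Iio 0) := by
      conv_rhs => rw [← Measure.map_neg_eq_self (volume : Measure ℝ)]
      rw [MeasurableEmbedding.restrict_map measurableEmbedding_neg]
      congr 1
      ext x
      simp
    rw [← hmap, lintegral_map hGmeas measurable_neg]
    apply lintegral_congr
    intro t
    rw [hGdef, hMfdef]
    simp only [abs_neg]
  have hS : {t : ℝ | t ≠ 0} = Set.Iio 0 ∪ Set.Ioi 0 := by
    ext t
    simp only [Set.mem_setOf_eq, Set.mem_union, Set.mem_Iio, Set.mem_Ioi]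
    exact ne_iff_lt_or_gt
  have htot : ∫⁻ t in {t : ℝ | t ≠ 0}, ENNReal.ofReal ‖F t‖ ≤ ENNReal.ofReal (2*(B1+B2)) := by
    calc ∫⁻ t in {t : ℝ | t ≠ 0}, ENNReal.ofReal ‖F t‖
        ≤ ∫⁻ t in {t : ℝ | t ≠ 0}, G t := setLIntegral_mono hGmeas hpt
      _ ≤ (∫⁻ t in Set.Iio (0:ℝ), G t) + ∫⁻ t in Set.Ioi (0:ℝ), G t := by
          rw [hS]; exact lintegral_union_le _ _ _
      _ ≤ (ENNReal.ofReal B1 + ENNReal.ofReal B2) + (ENNReal.ofReal B1 + ENNReal.ofReal B2) := by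
          rw [hneg]; exact add_le_add hIoi hIoi
      _ = ENNReal.ofReal (2*(B1+B2)) := by
          rw [← ENNReal.ofReal_add hB1nn hB2nn, ← two_mul,
            ENNReal.ofReal_mul (by norm_num : (0:ℝ) ≤ 2)]
          norm_num
  have habsJ : ‖J (m+m) ε b‖ ≤ 2*(B1+B2) := by
    rw [hJ]
    refine le_trans (norm_integral_le_lintegral_norm F) ?_
    exact ENNReal.toReal_le_of_le_ofReal (by positivity) htot
  -- simplify the bound
  have hbsne : |b| ^ s ≠ 0 := (Real.rpow_pos_of_pos hb' s).ne'
  have hcsne : |b+1| ^ s ≠ 0 := (Real.rpow_pos_of_pos hc' s).ne'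
  have hx : (0:ℝ) < |b|/|b+1| := div_pos hb' hc'
  have hlam1 : lam^(2*s) = |b|^s * (|b+1|^s)⁻¹ := by
    rw [hlamdef, Real.sqrt_eq_rpow, ← Real.rpow_mul hx.le,
      show (1/(2:ℝ))*(2*s) = s by ring,
      Real.div_rpow (abs_nonneg b) (abs_nonneg _), div_eq_mul_inv]
  have hlam2 : lam^(-(2*s)) = |b+1|^s * (|b|^s)⁻¹ := by
    rw [hlamdef, Real.sqrt_eq_rpow, ← Real.rpow_mul hx.le,
      show (1/(2:ℝ))*(-(2*s)) = -s by ring, Real.rpow_neg hx.le,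
      Real.div_rpow (abs_nonneg b) (abs_nonneg _), inv_div, div_eq_mul_inv]
  have hb2s : |b| ^ (-(2*s)) = (|b|^s * |b|^s)⁻¹ := by
    rw [show -(2*s) = -(s+s) by ring, Real.rpow_neg (abs_nonneg b), Real.rpow_add hb']
  have hc2s : |b+1| ^ (-(2*s)) = (|b+1|^s * |b+1|^s)⁻¹ := by
    rw [show -(2*s) = -(s+s) by ring, Real.rpow_neg (abs_nonneg (b+1)), Real.rpow_add hc']
  have hmul : (|b| * |b+1|) ^ (-s) = (|b|^s * |b+1|^s)⁻¹ := by
    rw [Real.rpow_neg (mul_nonneg (abs_nonneg _) (abs_nonneg _)),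
      Real.mul_rpow (abs_nonneg _) (abs_nonneg _)]
  have hT : 2*(B1+B2) = 2/s * (K * (|b| * |b+1|)^(-s)) := by
    rw [hB1def, hB2def, hlam1, hlam2, hb2s, hc2s, hmul]
    field_simp
    ring
  -- final arithmetic
  have hyA : |b| * |b+1| ≤ A/2 := by
    have h1 := sq_nonneg (|b| - |b+1|)
    have h2 : |b|^2 = b^2 := _root_.sq_abs b
    have h3 : |b+1|^2 = (b+1)^2 := _root_.sq_abs _
    rw [hAdef]; nlinarith
  have hy : 0 < |b| * |b+1| := mul_pos hb' hc'
  have hP : (0:ℝ) < 1+|b| := by positivity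
  have hP2 : (0:ℝ) < (1+|b|)^2 := by positivity
  have hPA1 : (1+|b|)^2/8 ≤ A := by
    rw [hAdef]; rcases abs_cases b with ⟨h1,h2⟩|⟨h1,h2⟩ <;> nlinarith [sq_nonneg (5*b+3), sq_nonneg b, sq_nonneg (b+1)]
  have hPA2 : A ≤ 2*(1+|b|)^2 := by
    rw [hAdef]; rcases abs_cases b with ⟨h1,h2⟩|⟨h1,h2⟩ <;> nlinarith [sq_nonneg (5*b+3), sq_nonneg b, sq_nonneg (b+1)]
  have hsq2 : ((1+|b|)^2 : ℝ) ^ (δ-q) = (1+|b|)^(2*(δ-q)) := by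
    rw [← Real.rpow_natCast (1+|b|) 2, ← Real.rpow_mul hP.le]
    norm_num
  have hAbound : A^(δ-q) ≤ (8:ℝ) ^ |δ - q| * (1+|b|)^(2*(δ-q)) := by
    rcases le_or_gt 0 (δ-q) with he|he
    · calc A^(δ-q) ≤ (2*(1+|b|)^2)^(δ-q) := Real.rpow_le_rpow hA.le hPA2 he
        _ = 2^(δ-q) * (1+|b|)^(2*(δ-q)) := by
            rw [Real.mul_rpow (by norm_num) hP2.le, hsq2]
        _ ≤ (8:ℝ) ^ |δ - q| * (1+|b|)^(2*(δ-q)) := by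
            apply mul_le_mul_of_nonneg_right _ (Real.rpow_nonneg hP.le _)
            rw [_root_.abs_of_nonneg he]
            exact Real.rpow_le_rpow (by norm_num) (by norm_num) he
    · calc A^(δ-q) ≤ ((1+|b|)^2/8)^(δ-q) :=
            Real.rpow_le_rpow_of_nonpos (by positivity) hPA1 he.le
        _ = (1+|b|)^(2*(δ-q)) * (8^(δ-q))⁻¹ := by
            rw [Real.div_rpow hP2.le (by norm_num), hsq2, div_eq_mul_inv]
        _ = (8:ℝ) ^ |δ - q| * (1+|b|)^(2*(δ-q)) := by
            rw [_root_.abs_of_neg he, Real.rpow_neg (by norm_num : (0:ℝ) ≤ 8)]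
            ring
  have hCs : (0:ℝ) ≤ (2/s)/2^(δ-s) :=
    div_nonneg (div_nonneg (by norm_num) hs0.le) (Real.rpow_nonneg (by norm_num) _)
  calc |b*(b+1)|^δ * ‖J (m+m) ε b‖
      ≤ |b*(b+1)|^δ * (2*(B1+B2)) :=
        mul_le_mul_of_nonneg_left habsJ (Real.rpow_nonneg (abs_nonneg _) δ)
    _ = (|b| * |b+1|)^δ * (2/s * (K * (|b| * |b+1|)^(-s))) := by rw [hT, abs_mul]
    _ = 2/s * K * (|b| * |b+1|)^(δ-s) := by
        rw [show δ - s = δ + -s by ring, Real.rpow_add hy]; ring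
    _ ≤ 2/s * K * (A/2)^(δ-s) := by
        apply mul_le_mul_of_nonneg_left (Real.rpow_le_rpow hy.le hyA (by linarith))
        exact mul_nonneg (div_nonneg (by norm_num) hs0.le) hK0
    _ = (2/s)/2^(δ-s) * (A^(s-q) * A^(δ-s)) := by
        rw [Real.div_rpow hA.le (by norm_num : (0:ℝ) ≤ 2), hKdef]; ring
    _ = (2/s)/2^(δ-s) * A^(δ-q) := by
        rw [← Real.rpow_add hA, show s-q+(δ-s) = δ-q by ring]
    _ ≤ (2/s)/2^(δ-s) * ((8:ℝ) ^ |δ - q| * (1+|b|)^(2*(δ-q))) :=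
        mul_le_mul_of_nonneg_left hAbound hCs
    _ = (2/s)/(2:ℝ)^(δ-s) * (8:ℝ)^|δ-q| * (1+|b|)^(-(((m+m):ℤ):ℝ)/2 + 2*δ) := by
        rw [show (-(((m+m):ℤ):ℝ)/2 + 2*δ) = 2*(δ-q) by push_cast; rw [hqdef]; ring]
        ring

end Stmt19
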